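/- Let H be an m-hypergraph of size n with edge ideal I. A monomial prime P ⊆ K[x_1,...,x_n] is a non-minimal associated prime of (I^∨)^2 if and only if P = (x_{i_1},...,x_{i_q}) and there exists a 2-cover C that is not the sum of two 1-covers such that for each j ≤ q, the tuple C + e_{i_j} is a 2-cover that is a sum of two 1-covers, and for every nonzero D ∈ ℕ^n supported outside {i_1,...,i_q}, the tuple C + D is not a sum of two 1-covers. -/

import Mathlib

open MvPolynomial Finset

noncomputable section

/-- A `k`-cover of a hypergraph with edge set `E`: a nonzero tuple whose entries
sum to at least `k` over every edge. -/
def IsCover {V : Type*} (E : Finset (Finset V)) (k : ℕ) (a : V → ℕ) : Prop :=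
  a ≠ 0 ∧ ∀ e ∈ E, k ≤ ∑ i ∈ e, a i

/-- `a` is a sum of two 1-covers. -/
def SumTwoOneCovers {V : Type*} (E : Finset (Finset V)) (a : V → ℕ) : Prop :=
  ∃ b c : V → ℕ, IsCover E 1 b ∧ IsCover E 1 c ∧ a = b + c

/-- An independent set: no edge is contained in `S`. -/
def IsIndep {V : Type*} (E : Finset (Finset V)) (S : Finset V) : Prop :=
  ∀ e ∈ E, ¬ e ⊆ S

/-- `i` is in the neighborhood of `S`: `i ∉ S` and some edge consists of `i`
together with vertices of `S`. -/
def InNbhd {V : Type*} (E : Finset (Finset V)) (S : Finset V) (i : V) : Prop :=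
  i ∉ S ∧ ∃ e ∈ E, i ∈ e ∧ ∀ j ∈ e, j ≠ i → j ∈ S

open Classical in
/-- The 2-cover `A_S` attached to an independent set `S`:
`0` on `S`, `2` on `N(S)`, and `1` elsewhere. -/
noncomputable def indepCover {V : Type*} (E : Finset (Finset V)) (S : Finset V) : V → ℕ :=
  fun i => if i ∈ S then 0 else if InNbhd E S i then 2 else 1

/-- The Alexander dual of the edge ideal: `⋂_{edges e} (x_i : i ∈ e)`. -/
noncomputable def dualIdeal {V : Type*} (K : Type*) [Field K] (E : Finset (Finset V)) :
    Ideal (MvPolynomial V K) :=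
  ⨅ e ∈ E, Ideal.span (X '' (e : Set V))

/-- The monomial `x_1^{a_1} ⋯ x_n^{a_n}` attached to a tuple `a`. -/
noncomputable def coverMonomial {V : Type*} [Fintype V] (K : Type*) [Field K] (a : V → ℕ) :
    MvPolynomial V K :=
  ∏ i, X i ^ a i

/-- Connectedness of a hypergraph: any two vertices are linked by a chain of
vertices in which consecutive vertices share an edge. -/
def HConnected {V : Type*} (E : Finset (Finset V)) : Prop :=
  ∀ x y : V, ∃ l : List V, l.head? = some x ∧ l.getLast? = some y ∧
    l.Chain' fun a b => ∃ e ∈ E, a ∈ e ∧ b ∈ e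

/-- The cyclic 3-hypergraph with edges `{x_1,x_2,x_3}, {x_3,x_4,x_5}, …`
(0-based: `{2j, 2j+1, 2j+2}` modulo `n`). -/
def cyc3 (n : ℕ) (hn : 0 < n) : Finset (Finset (Fin n)) :=
  (Finset.range ((n + 1) / 2)).image fun j =>
    ({⟨(2 * j) % n, Nat.mod_lt _ hn⟩, ⟨(2 * j + 1) % n, Nat.mod_lt _ hn⟩,
      ⟨(2 * j + 2) % n, Nat.mod_lt _ hn⟩} : Finset (Fin n))

/-- The alternating tuple: `1` on odd vertices `x_1, x_3, …` (0-based even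
indices), `0` on even vertices. -/
def altCover (n : ℕ) : Fin n → ℕ :=
  fun i => if (i : ℕ) % 2 = 0 then 1 else 0


namespace Stmt5Aux


variable {K : Type*} [Field K] {n : ℕ}

/-- strict lex order on exponent vectors -/
def LLT (a b : Fin n →₀ ℕ) : Prop := ∃ i, a i < b i ∧ ∀ j, j < i → a j = b j

lemma LLT.irrefl (a : Fin n →₀ ℕ) : ¬ LLT a a := by
  rintro ⟨i, hi, -⟩; exact lt_irrefl _ hi

lemma LLT.trans {a b c : Fin n →₀ ℕ} (h1 : LLT a b) (h2 : LLT b c) : LLT a c := by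
  obtain ⟨i, hi, hj⟩ := h1
  obtain ⟨i', hi', hj'⟩ := h2
  rcases lt_trichotomy i i' with h | h | h
  · exact ⟨i, by rw [hj' i h] at hi; exact hi, fun j hji => (hj j hji).trans (hj' j (hji.trans h))⟩
  · subst h; exact ⟨i, hi.trans hi', fun j hji => (hj j hji).trans (hj' j hji)⟩
  · exact ⟨i', by rw [hj i' h]; exact hi', fun j hji => (hj j (hji.trans h)).trans (hj' j hji)⟩

lemma LLT.tri {a b : Fin n →₀ ℕ} (h : a ≠ b) : LLT a b ∨ LLT b a := by
  classical
  have hne : ((a.support ∪ b.support).filter fun j => a j ≠ b j).Nonempty := by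
    have : ∃ j, a j ≠ b j := by
      by_contra hc; push_neg at hc; exact h (Finsupp.ext hc)
    obtain ⟨j, hj⟩ := this
    refine ⟨j, Finset.mem_filter.2 ⟨?_, hj⟩⟩
    rcases eq_or_ne (a j) 0 with h0 | h0
    · exact Finset.mem_union.2 (Or.inr (Finsupp.mem_support_iff.2 (fun hb => hj (by rw [h0, hb]))))
    · exact Finset.mem_union.2 (Or.inl (Finsupp.mem_support_iff.2 h0))
  obtain ⟨i, hi, hmin⟩ := Finset.exists_min_image _ id hne
  have hine := (Finset.mem_filter.1 hi).2
  have hlow : ∀ j, j < i → a j = b j := by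
    intro j hji
    by_contra hc
    have : j ∈ (a.support ∪ b.support).filter fun j => a j ≠ b j := by
      refine Finset.mem_filter.2 ⟨?_, hc⟩
      rcases eq_or_ne (a j) 0 with h0 | h0
      · exact Finset.mem_union.2 (Or.inr (Finsupp.mem_support_iff.2 (fun hb => hc (by rw [h0, hb]))))
      · exact Finset.mem_union.2 (Or.inl (Finsupp.mem_support_iff.2 h0))
    exact absurd (hmin j this) (not_le.2 hji)
  rcases lt_or_gt_of_ne hine with h' | h'
  · exact Or.inl ⟨i, h', hlow⟩
  · exact Or.inr ⟨i, h', fun j hj => (hlow j hj).symm⟩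

lemma LLT.add_right {a b : Fin n →₀ ℕ} (c : Fin n →₀ ℕ) (h : LLT a b) : LLT (a + c) (b + c) := by
  obtain ⟨i, hi, hj⟩ := h
  exact ⟨i, by simp only [Finsupp.add_apply]; omega,
    fun j hji => by simp only [Finsupp.add_apply, hj j hji]⟩

lemma exists_lex_max (s : Finset (Fin n →₀ ℕ)) (hs : s.Nonempty) :
    ∃ v ∈ s, ∀ x ∈ s, x = v ∨ LLT x v := by
  classical
  revert hs
  induction s using Finset.induction_on with
  | empty => intro hs; exact absurd hs (by simp)
  | @insert a s ha ih =>
    intro _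
    rcases s.eq_empty_or_nonempty with rfl | hs'
    · exact ⟨a, by simp, by simp⟩
    · obtain ⟨v, hv, hmax⟩ := ih hs'
      rcases eq_or_ne a v with heq | hav
      · refine ⟨v, Finset.mem_insert_of_mem hv, fun x hx => ?_⟩
        rcases Finset.mem_insert.1 hx with rfl | hx
        · exact Or.inl heq
        · exact hmax x hx
      rcases LLT.tri hav with h | h
      · refine ⟨v, Finset.mem_insert_of_mem hv, fun x hx => ?_⟩
        rcases Finset.mem_insert.1 hx with rfl | hx
        · exact Or.inr h
        · exact hmax x hx
      · refine ⟨a, Finset.mem_insert_self _ _, fun x hx => ?_⟩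
        rcases Finset.mem_insert.1 hx with rfl | hx
        · exact Or.inl rfl
        · rcases hmax x hx with rfl | hx'
          · exact Or.inr h
          · exact Or.inr (hx'.trans h)

lemma coeff_top_mul {p q : MvPolynomial (Fin n) K} {v w : Fin n →₀ ℕ}
    (hv : v ∈ p.support) (hvm : ∀ x ∈ p.support, x = v ∨ LLT x v)
    (hw : w ∈ q.support) (hwm : ∀ x ∈ q.support, x = w ∨ LLT x w) :
    coeff (v + w) (p * q) = coeff v p * coeff w q := by
  classical
  rw [coeff_mul]
  refine Finset.sum_eq_single_of_mem (v, w) (Finset.HasAntidiagonal.mem_antidiagonal.2 rfl) ?_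
  rintro ⟨x1, x2⟩ hx hne
  have hsum : x1 + x2 = v + w := Finset.HasAntidiagonal.mem_antidiagonal.1 hx
  by_cases h1 : coeff x1 p = 0
  · simp [h1]
  by_cases h2 : coeff x2 q = 0
  · simp [h2]
  exfalso
  have hx1 := hvm x1 (MvPolynomial.mem_support_iff.2 h1)
  have hx2 := hwm x2 (MvPolynomial.mem_support_iff.2 h2)
  rcases hx1 with rfl | hx1
  · rcases hx2 with rfl | hx2
    · exact hne rfl
    · have := add_left_cancel hsum
      exact absurd this (by rintro rfl; exact (LLT.irrefl _ hx2))
  · have hlt : LLT (x1 + x2) (v + w) := by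
      rcases hx2 with rfl | hx2
      · exact LLT.add_right _ hx1
      · exact (LLT.add_right x2 hx1).trans (by
          rw [add_comm v x2, add_comm v w]; exact LLT.add_right v hx2)
    rw [hsum] at hlt
    exact LLT.irrefl _ hlt

/-- membership in the span of a set of variables -/
lemma mem_span_X_iff (S : Finset (Fin n)) (f : MvPolynomial (Fin n) K) :
    f ∈ Ideal.span (X '' (S : Set (Fin n)) : Set (MvPolynomial (Fin n) K)) ↔
      ∀ d ∈ f.support, ∃ i ∈ S, d i ≠ 0 := by
  classical
  constructor
  · intro hf
    let 𝔍 : Ideal (MvPolynomial (Fin n) K) :=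
      { carrier := {g | ∀ d ∈ g.support, ∃ i ∈ S, d i ≠ 0}
        add_mem' := by
          intro a b ha hb d hd
          rcases Finset.mem_union.1 (MvPolynomial.support_add hd) with h | h
          exacts [ha d h, hb d h]
        zero_mem' := by simp
        smul_mem' := by
          intro c g hg d hd
          rw [smul_eq_mul] at hd
          rcases Finset.mem_add.1 (MvPolynomial.support_mul _ _ hd) with ⟨d1, -, d2, hd2, rfl⟩
          obtain ⟨i, hiS, hi⟩ := hg d2 hd2
          exact ⟨i, hiS, by simp only [Finsupp.add_apply]; omega⟩ }
    have : Ideal.span (X '' (S : Set (Fin n)) : Set (MvPolynomial (Fin n) K)) ≤ 𝔍 := by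
      rw [Ideal.span_le]
      rintro g ⟨i, hi, rfl⟩
      intro d hd
      rw [MvPolynomial.support_X, Finset.mem_singleton] at hd
      subst hd
      exact ⟨i, hi, by simp⟩
    exact this hf
  · intro h
    rw [MvPolynomial.as_sum f]
    refine Ideal.sum_mem _ fun d hd => ?_
    obtain ⟨i, hiS, hi⟩ := h d hd
    have hle : Finsupp.single i 1 ≤ d := Finsupp.single_le_iff.2 (by omega)
    have : (monomial d) (coeff d f) =
        (monomial (d - Finsupp.single i 1)) (coeff d f) * X i := by
      rw [MvPolynomial.X, monomial_mul, mul_one, tsub_add_cancel_of_le hle]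
    rw [this]
    exact Ideal.mul_mem_left _ _ (Ideal.subset_span ⟨i, hiS, rfl⟩)

lemma X_mem_span_X_iff (S : Finset (Fin n)) (i : Fin n) :
    (X i : MvPolynomial (Fin n) K) ∈ Ideal.span (X '' (S : Set (Fin n))) ↔ i ∈ S := by
  rw [mem_span_X_iff]
  constructor
  · intro h
    obtain ⟨j, hj, hij⟩ := h (Finsupp.single i 1) (by rw [MvPolynomial.support_X]; simp)
    have hij' : i = j := by
      by_contra hc
      simp [Finsupp.single_apply, hc] at hij
    exact hij' ▸ hj
  · intro h d hd
    rw [MvPolynomial.support_X, Finset.mem_singleton] at hd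
    subst hd
    exact ⟨i, h, by simp⟩

/-- generic monomial-support ideal characterization helper -/
lemma span_monomial_le {A : Set (Fin n →₀ ℕ)} {I : Ideal (MvPolynomial (Fin n) K)}
    (h : ∀ d ∈ A, monomial d (1 : K) ∈ I) (f : MvPolynomial (Fin n) K)
    (hf : ∀ d ∈ f.support, d ∈ A) : f ∈ I := by
  rw [MvPolynomial.as_sum f]
  refine Ideal.sum_mem _ fun d hd => ?_
  have : (monomial d) (coeff d f) = C (coeff d f) * monomial d 1 := by
    rw [C_mul_monomial, mul_one]
  rw [this]
  exact Ideal.mul_mem_left _ _ (h d (hf d hd))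

lemma mem_dualIdeal_iff (E : Finset (Finset (Fin n))) (f : MvPolynomial (Fin n) K) :
    f ∈ dualIdeal K E ↔ ∀ d ∈ f.support, ∀ e ∈ E, ∃ i ∈ e, d i ≠ 0 := by
  unfold dualIdeal
  simp only [Submodule.mem_iInf]
  constructor
  · intro h d hd e he
    exact (mem_span_X_iff e f).1 (h e he) d hd
  · intro h e he
    exact (mem_span_X_iff e f).2 fun d hd => h d hd e he

lemma one_le_sum_iff (e : Finset (Fin n)) (a : Fin n → ℕ) :
    (1 ≤ ∑ i ∈ e, a i) ↔ ∃ i ∈ e, a i ≠ 0 := by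
  rw [Nat.one_le_iff_ne_zero, Ne, Finset.sum_eq_zero_iff]
  push_neg
  rfl

lemma monomial_mem_dualIdeal {E : Finset (Finset (Fin n))} {d : Fin n →₀ ℕ}
    (h : ∀ e ∈ E, ∃ i ∈ e, d i ≠ 0) : monomial d (1 : K) ∈ dualIdeal K E := by
  classical
  rw [mem_dualIdeal_iff]
  intro d' hd'
  rw [support_monomial, if_neg one_ne_zero, Finset.mem_singleton] at hd'
  subst hd'
  exact h

/-- `f ∈ (dualIdeal K E)^2` iff every monomial of `f` is a sum of two 1-covers
(assuming every edge is nonempty and `E` is nonempty). -/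
lemma mem_sq_iff {E : Finset (Finset (Fin n))} (hE : E.Nonempty)
    (hne : ∀ e ∈ E, e.Nonempty) (f : MvPolynomial (Fin n) K) :
    f ∈ (dualIdeal K E) ^ 2 ↔ ∀ d ∈ f.support, SumTwoOneCovers E ⇑d := by
  classical
  constructor
  · intro hf
    let 𝔍 : Ideal (MvPolynomial (Fin n) K) :=
      { carrier := {g | ∀ d ∈ g.support, SumTwoOneCovers E ⇑d}
        add_mem' := by
          intro a b ha hb d hd
          rcases Finset.mem_union.1 (MvPolynomial.support_add hd) with h | h
          exacts [ha d h, hb d h]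
        zero_mem' := by simp
        smul_mem' := by
          intro c g hg d hd
          rw [smul_eq_mul] at hd
          rcases Finset.mem_add.1 (MvPolynomial.support_mul _ _ hd) with ⟨d1, -, d2, hd2, rfl⟩
          obtain ⟨b, c', hb, hc', habc⟩ := hg d2 hd2
          exact ⟨⇑d1 + b, c', by
            constructor
            · intro h0
              have : b = 0 := by
                funext j
                have := congrFun h0 j
                simp only [Pi.add_apply, Pi.zero_apply] at this ⊢
                omega
              exact hb.1 this
            · intro e he
              calc 1 ≤ ∑ i ∈ e, b i := hb.2 e he
                _ ≤ ∑ i ∈ e, (⇑d1 + b) i := Finset.sum_le_sum fun i _ => by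
                    simp only [Pi.add_apply]; omega,
            hc', by
              rw [Finsupp.coe_add, habc]
              funext j; simp only [Pi.add_apply]; ring⟩ }
    have hle : (dualIdeal K E) ^ 2 ≤ 𝔍 := by
      rw [pow_two, Ideal.mul_le]
      intro r hr s hs d hd
      rcases Finset.mem_add.1 (MvPolynomial.support_mul _ _ hd) with ⟨d1, hd1, d2, hd2, rfl⟩
      have h1 := (mem_dualIdeal_iff E r).1 hr d1 hd1
      have h2 := (mem_dualIdeal_iff E s).1 hs d2 hd2
      obtain ⟨e0, he0⟩ := hE
      have hcov : ∀ d' : Fin n →₀ ℕ, (∀ e ∈ E, ∃ i ∈ e, d' i ≠ 0) → IsCover E 1 ⇑d' := by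
        intro d' hd'
        refine ⟨?_, fun e he => (one_le_sum_iff e ⇑d').2 (hd' e he)⟩
        obtain ⟨i, -, hi⟩ := hd' e0 he0
        intro h0
        exact hi (congrFun h0 i)
      exact ⟨⇑d1, ⇑d2, hcov d1 h1, hcov d2 h2, by rw [Finsupp.coe_add]⟩
    exact hle hf
  · intro h
    refine span_monomial_le (A := {d | SumTwoOneCovers E ⇑d}) ?_ f h
    rintro d ⟨b, c, hb, hc, habc⟩
    have hbc : Finsupp.equivFunOnFinite.symm b + Finsupp.equivFunOnFinite.symm c = d := by
      apply DFunLike.coe_injective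
      show ⇑(Finsupp.equivFunOnFinite.symm b + Finsupp.equivFunOnFinite.symm c) = ⇑d
      rw [Finsupp.coe_add, habc]
      rfl
    have : (monomial d) (1 : K) =
        monomial (Finsupp.equivFunOnFinite.symm b) 1 * monomial (Finsupp.equivFunOnFinite.symm c) 1 := by
      rw [monomial_mul, mul_one, hbc]
    rw [this, pow_two]
    refine Ideal.mul_mem_mul ?_ ?_
    · exact monomial_mem_dualIdeal fun e he => by
        have := (one_le_sum_iff e b).1 (hb.2 e he)
        simpa using this
    · exact monomial_mem_dualIdeal fun e he => by
        have := (one_le_sum_iff e c).1 (hc.2 e he)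
        simpa using this


section NF

variable {A : Set (Fin n →₀ ℕ)} {I : Ideal (MvPolynomial (Fin n) K)}

open Classical in
/-- normal form: delete all monomials lying in `A` -/
noncomputable def nf (A : Set (Fin n →₀ ℕ)) (f : MvPolynomial (Fin n) K) :
    MvPolynomial (Fin n) K :=
  (f.support.filter fun d => d ∉ A).sum fun d => monomial d (coeff d f)

lemma coeff_sum_monomial (s : Finset (Fin n →₀ ℕ)) (g : (Fin n →₀ ℕ) → K) (d : Fin n →₀ ℕ) :
    coeff d (∑ x ∈ s, monomial x (g x)) = if d ∈ s then g d else 0 := by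
  classical
  rw [coeff_sum, Finset.sum_congr rfl fun x _ => coeff_monomial d x (g x)]
  exact Finset.sum_ite_eq' s d g

open Classical in
lemma nf_coeff (f : MvPolynomial (Fin n) K) (d : Fin n →₀ ℕ) :
    coeff d (nf A f) = if d ∈ f.support ∧ d ∉ A then coeff d f else 0 := by
  unfold nf
  rw [coeff_sum_monomial]
  simp only [Finset.mem_filter]

open Classical in
lemma nf_support (f : MvPolynomial (Fin n) K) :
    (nf A f).support = f.support.filter (fun d => d ∉ A) := by
  ext d
  rw [MvPolynomial.mem_support_iff, nf_coeff, Finset.mem_filter]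
  split_ifs with h
  · exact iff_of_true (MvPolynomial.mem_support_iff.1 h.1) h
  · exact iff_of_false (fun hc => hc rfl) h

lemma sub_nf_mem (hI : ∀ g, g ∈ I ↔ ∀ d ∈ g.support, d ∈ A) (f : MvPolynomial (Fin n) K) :
    f - nf A f ∈ I := by
  rw [hI]
  intro d hd
  have h1 : coeff d (f - nf A f) ≠ 0 := MvPolynomial.mem_support_iff.1 hd
  rw [coeff_sub, nf_coeff] at h1
  by_contra hdA
  rcases Decidable.em (d ∈ f.support) with hdf | hdf
  · rw [if_pos ⟨hdf, hdA⟩, sub_self] at h1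
    exact h1 rfl
  · rw [if_neg (fun h => hdf h.1), sub_zero] at h1
    exact h1 (by rwa [← MvPolynomial.notMem_support_iff])

lemma mul_mem_iff_nf (hI : ∀ g, g ∈ I ↔ ∀ d ∈ g.support, d ∈ A)
    (g f : MvPolynomial (Fin n) K) : g * f ∈ I ↔ g * nf A f ∈ I := by
  have h := sub_nf_mem hI f
  constructor
  · intro h'
    have : g * nf A f = g * f - g * (f - nf A f) := by ring
    rw [this]
    exact Ideal.sub_mem _ h' (Ideal.mul_mem_left _ _ h)
  · intro h'
    have : g * f = g * nf A f + g * (f - nf A f) := by ring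
    rw [this]
    exact Ideal.add_mem _ h' (Ideal.mul_mem_left _ _ h)

lemma top_pow_lemma (hI : ∀ g, g ∈ I ↔ ∀ d ∈ g.support, d ∈ A)
    {p : MvPolynomial (Fin n) K} {v : Fin n →₀ ℕ} (hv : v ∈ p.support)
    (hvm : ∀ x ∈ p.support, x = v ∨ LLT x v) :
    ∀ N (f : MvPolynomial (Fin n) K), (nf A f).support.card ≤ N → p * f ∈ I →
      ∃ s : ℕ, (monomial v (coeff v p)) ^ s * f ∈ I := by
  classical
  intro N
  induction N with
  | zero =>
    intro f hcard hpf
    have h0 : nf A f = 0 :=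
      support_eq_empty.1 (Finset.card_eq_zero.1 (le_antisymm hcard (Nat.zero_le _)))
    refine ⟨0, ?_⟩
    rw [pow_zero, one_mul]
    have := sub_nf_mem hI f
    rwa [h0, sub_zero] at this
  | succ N ih =>
    intro f hcard hpf
    rcases eq_or_ne (nf A f) 0 with h0 | h0
    · refine ⟨0, ?_⟩
      rw [pow_zero, one_mul]
      have := sub_nf_mem hI f
      rwa [h0, sub_zero] at this
    · have hns : (nf A f).support.Nonempty :=
        Finset.nonempty_iff_ne_empty.2 fun h => h0 (support_eq_empty.1 h)
      obtain ⟨w, hw, hwm⟩ := exists_lex_max _ hns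
      have hpnf : p * nf A f ∈ I := (mul_mem_iff_nf hI p f).1 hpf
      have htop : coeff (v + w) (p * nf A f) = coeff v p * coeff w (nf A f) :=
        coeff_top_mul hv hvm hw hwm
      have hvwA : (v + w) ∈ A := by
        refine (hI _).1 hpnf _ ?_
        rw [MvPolynomial.mem_support_iff, htop]
        exact mul_ne_zero (MvPolynomial.mem_support_iff.1 hv)
          (MvPolynomial.mem_support_iff.1 hw)
      set q : MvPolynomial (Fin n) K := monomial v (coeff v p) with hq
      set f' : MvPolynomial (Fin n) K := q * nf A f with hf'
      have hsub : (nf A f').support ⊆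
          ((nf A f).support.image (fun d => d + v)).erase (v + w) := by
        intro d hd
        rw [nf_support, Finset.mem_filter] at hd
        obtain ⟨hd1, hd2⟩ := hd
        refine Finset.mem_erase.2 ⟨fun h => hd2 (h ▸ hvwA), ?_⟩
        have hcd : coeff d f' ≠ 0 := MvPolynomial.mem_support_iff.1 hd1
        rw [hf', hq, mul_comm, coeff_mul_monomial'] at hcd
        by_cases hvd : v ≤ d
        · rw [if_pos hvd] at hcd
      /- d - v in supp nf A f -/
          refine Finset.mem_image.2 ⟨d - v, MvPolynomial.mem_support_iff.2 fun h => hcd (by rw [h, zero_mul]), ?_⟩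
          rw [tsub_add_cancel_of_le hvd]
        · rw [if_neg hvd] at hcd
          exact absurd rfl hcd
      have himg : v + w ∈ (nf A f).support.image (fun d => d + v) :=
        Finset.mem_image.2 ⟨w, hw, add_comm w v⟩
      have hcard' : (nf A f').support.card ≤ N := by
        have h1 := Finset.card_le_card hsub
        rw [Finset.card_erase_of_mem himg] at h1
        have h2 : ((nf A f).support.image (fun d => d + v)).card ≤ N + 1 :=
          le_trans (Finset.card_image_le) hcard
        omega
      have hpf' : p * f' ∈ I := by
        have : p * f' = q * (p * nf A f) := by rw [hf']; ring
        rw [this]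
        exact Ideal.mul_mem_left _ _ hpnf
      obtain ⟨s, hs⟩ := ih f' hcard' hpf'
      refine ⟨s + 1, ?_⟩
      rw [mul_mem_iff_nf hI]
      have : q ^ (s + 1) * nf A f = q ^ s * f' := by rw [hf']; ring
      rw [this]
      exact hs

lemma monomials_mem_of_mem (hI : ∀ g, g ∈ I ↔ ∀ d ∈ g.support, d ∈ A)
    {P : Ideal (MvPolynomial (Fin n) K)} (hP : P.IsPrime)
    {f : MvPolynomial (Fin n) K} (hf : f ∉ I)
    (hann : ∀ g, g ∈ P ↔ g * f ∈ I) :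
    ∀ p ∈ P, ∀ v ∈ p.support, monomial v (1 : K) ∈ P := by
  classical
  suffices h : ∀ N, ∀ p ∈ P, p.support.card ≤ N → ∀ v ∈ p.support, monomial v (1:K) ∈ P by
    intro p hp
    exact h p.support.card p hp le_rfl
  intro N
  induction N with
  | zero =>
    intro p _ hcard v hv
    rw [Finset.card_eq_zero.1 (le_antisymm hcard (Nat.zero_le _))] at hv
    simp at hv
  | succ N ih =>
    intro p hp hcard v hv
    obtain ⟨v₀, hv₀, hvm⟩ := exists_lex_max _ ⟨v, hv⟩
    have hc0 : coeff v₀ p ≠ 0 := MvPolynomial.mem_support_iff.1 hv₀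
    obtain ⟨s, hs⟩ := top_pow_lemma hI hv₀ hvm (nf A f).support.card f le_rfl ((hann p).1 hp)
    have hqP : monomial v₀ (coeff v₀ p) ∈ P := hP.mem_of_pow_mem s ((hann _).2 hs)
    have hq1 : monomial v₀ (1:K) ∈ P := by
      have : monomial v₀ (1:K) = C (coeff v₀ p)⁻¹ * monomial v₀ (coeff v₀ p) := by
        rw [C_mul_monomial, inv_mul_cancel₀ hc0]
      rw [this]
      exact Ideal.mul_mem_left _ _ hqP
    rcases eq_or_ne v v₀ with rfl | hne
    · exact hq1
    · set p' : MvPolynomial (Fin n) K := p - monomial v₀ (coeff v₀ p) with hp'def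
      have hp' : p' ∈ P := Ideal.sub_mem _ hp hqP
      have hsupp : p'.support = p.support.erase v₀ := by
        ext d
        rw [MvPolynomial.mem_support_iff, Finset.mem_erase, MvPolynomial.mem_support_iff,
          hp'def, coeff_sub, coeff_monomial]
        rcases eq_or_ne v₀ d with rfl | hd
        · simp
        · rw [if_neg hd, sub_zero]
          exact ⟨fun h => ⟨Ne.symm hd, h⟩, fun h => h.2⟩
      have hcard' : p'.support.card ≤ N := by
        rw [hsupp, Finset.card_erase_of_mem hv₀]
        omega
      exact ih p' hp' hcard' v (by rw [hsupp]; exact Finset.mem_erase.2 ⟨hne, hv⟩)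

end NF

lemma exists_mem_of_prod_mem {Q : Ideal (MvPolynomial (Fin n) K)} (hQ : Q.IsPrime)
    {ι : Type*} {s : Finset ι} {g : ι → MvPolynomial (Fin n) K}
    (h : (∏ j ∈ s, g j) ∈ Q) : ∃ j ∈ s, g j ∈ Q := by
  classical
  induction s using Finset.induction_on with
  | empty =>
    rw [Finset.prod_empty] at h
    exact absurd ((Ideal.eq_top_iff_one Q).2 h) hQ.ne_top
  | @insert a s ha ih =>
    rw [Finset.prod_insert ha] at h
    rcases hQ.mem_or_mem h with h1 | h2
    · exact ⟨a, Finset.mem_insert_self _ _, h1⟩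
    · obtain ⟨j, hj, hjQ⟩ := ih h2
      exact ⟨j, Finset.mem_insert_of_mem hj, hjQ⟩

lemma monomial_one_eq_prod (d : Fin n →₀ ℕ) :
    monomial d (1 : K) = ∏ j ∈ d.support, X j ^ d j := by
  rw [monomial_eq, map_one, one_mul]
  rfl

lemma isPrime_span_X (T : Finset (Fin n)) :
    (Ideal.span (X '' (T : Set (Fin n)) : Set (MvPolynomial (Fin n) K))).IsPrime := by
  classical
  set φ : MvPolynomial (Fin n) K →ₐ[K] MvPolynomial (Fin n) K :=
    aeval (fun i => if i ∈ T then 0 else X i) with hφdef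
  have hker : Ideal.span (X '' (T : Set (Fin n))) = RingHom.ker φ := by
    apply le_antisymm
    · rw [Ideal.span_le]
      rintro g ⟨i, hi, rfl⟩
      have hi' : i ∈ T := hi
      have : φ (X i) = 0 := by rw [hφdef, aeval_X, if_pos hi']
      simpa [RingHom.mem_ker] using this
    · intro f hf
      rw [RingHom.mem_ker] at hf
      rw [mem_span_X_iff]
      intro d₀ hd₀
      by_contra hc
      push_neg at hc
      have hφf : φ f = ∑ d ∈ f.support,
          (if ∃ i ∈ T, d i ≠ 0 then 0 else monomial d (coeff d f)) := by
        conv_lhs => rw [MvPolynomial.as_sum f]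
        rw [map_sum]
        refine Finset.sum_congr rfl fun d _ => ?_
        rw [hφdef, aeval_monomial]
        by_cases hdT : ∃ i ∈ T, d i ≠ 0
        · rw [if_pos hdT]
          obtain ⟨i, hiT, hdi⟩ := hdT
          refine mul_eq_zero_of_right _ ?_
          refine Finset.prod_eq_zero (Finsupp.mem_support_iff.2 hdi) ?_
          show (if i ∈ T then (0 : MvPolynomial (Fin n) K) else X i) ^ d i = 0
          rw [if_pos hiT, zero_pow hdi]
        · rw [if_neg hdT, monomial_eq]
          have : (algebraMap K (MvPolynomial (Fin n) K)) (coeff d f) = C (coeff d f) := rfl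
          rw [this]
          congr 1
          refine Finsupp.prod_congr fun i hi => ?_
          show (if i ∈ T then (0 : MvPolynomial (Fin n) K) else X i) ^ d i = X i ^ d i
          rw [if_neg fun hiT => hdT ⟨i, hiT, Finsupp.mem_support_iff.1 hi⟩]
      have h0 : coeff d₀ (φ f) = coeff d₀ f := by
        rw [hφf, coeff_sum]
        rw [Finset.sum_eq_single_of_mem d₀ hd₀ ?_]
        · rw [if_neg (by push_neg; exact hc), coeff_monomial, if_pos rfl]
        · intro b _ hb
          split_ifs with h
          · exact coeff_zero _
          · rw [coeff_monomial, if_neg hb]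
      rw [hf, coeff_zero] at h0
      exact MvPolynomial.mem_support_iff.1 hd₀ h0.symm
  rw [hker]
  exact RingHom.ker_isPrime φ

lemma mem_ann_iff (I : Ideal (MvPolynomial (Fin n) K)) (f g : MvPolynomial (Fin n) K) :
    g ∈ (⊥ : Submodule (MvPolynomial (Fin n) K) (MvPolynomial (Fin n) K ⧸ I)).colon
      {(Ideal.Quotient.mk I f : MvPolynomial (Fin n) K ⧸ I)} ↔ g * f ∈ I := by
  rw [Submodule.mem_colon_singleton, Submodule.mem_bot]
  show Ideal.Quotient.mk I (g * f) = 0 ↔ _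
  rw [Ideal.Quotient.eq_zero_iff_mem]

lemma exists_colon_le {I P : Ideal (MvPolynomial (Fin n) K)} (hP : P.IsPrime)
    {f : MvPolynomial (Fin n) K}
    (hann : ∀ g, g ∈ P ↔ g * f ∈ I) :
    ∃ u ∈ f.support, ∀ g, g * monomial u (1:K) ∈ I → g ∈ P := by
  classical
  have hprod : (∏ u ∈ f.support, I.colon (Submodule.span (MvPolynomial (Fin n) K) {monomial u (1:K)})) ≤ P := by
    refine le_trans Ideal.prod_le_inf ?_
    intro g hg
    rw [Submodule.mem_finsetInf] at hg
    rw [hann]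
    have heq : g * f = ∑ u ∈ f.support, C (coeff u f) * (g * monomial u 1) := by
      conv_lhs => rw [MvPolynomial.as_sum f]
      rw [Finset.mul_sum]
      refine Finset.sum_congr rfl fun u _ => ?_
      rw [show (monomial u) (coeff u f) = C (coeff u f) * monomial u 1 by
        rw [C_mul_monomial, mul_one]]
      ring
    rw [heq]
    refine Ideal.sum_mem _ fun u hu => ?_
    refine Ideal.mul_mem_left _ _ ?_
    have := hg u hu
    rwa [Submodule.mem_colon_span_singleton, smul_eq_mul] at this
  obtain ⟨u, hu, hle⟩ := (hP.prod_le).1 hprod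
  refine ⟨u, hu, fun g hg => hle ?_⟩
  rw [Submodule.mem_colon_span_singleton, smul_eq_mul]
  exact hg

variable (E : Finset (Finset (Fin n)))

lemma dual_le_span_of_edge {e : Finset (Fin n)} (he : e ∈ E) :
    dualIdeal K E ≤ Ideal.span (X '' (e : Set (Fin n))) := by
  intro g hg
  rw [mem_span_X_iff]
  intro d hd
  exact (mem_dualIdeal_iff E g).1 hg d hd e he

lemma le_of_sq_le {Q : Ideal (MvPolynomial (Fin n) K)} (hQ : Q.IsPrime)
    (h : (dualIdeal K E) ^ 2 ≤ Q) : dualIdeal K E ≤ Q := by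
  intro g hg
  rcases hQ.mem_or_mem (h (by rw [pow_two]; exact Ideal.mul_mem_mul hg hg)) with h1 | h1 <;>
    exact h1

lemma exists_edge_subset {T : Finset (Fin n)} (hE : E.Nonempty)
    (hle : dualIdeal K E ≤ Ideal.span (X '' (T : Set (Fin n)))) :
    ∃ e ∈ E, e ⊆ T := by
  classical
  by_contra hc
  push_neg at hc
  set d : Fin n →₀ ℕ :=
    Finsupp.equivFunOnFinite.symm (fun j => if j ∈ T then 0 else 1) with hd
  have hdmem : monomial d (1:K) ∈ dualIdeal K E := by
    refine monomial_mem_dualIdeal fun e he => ?_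
    obtain ⟨i, hie, hiT⟩ := Finset.not_subset.1 (hc e he)
    refine ⟨i, hie, ?_⟩
    have : d i = if i ∈ T then 0 else 1 := rfl
    rw [this, if_neg hiT]
    exact one_ne_zero
  have := (mem_span_X_iff T _).1 (hle hdmem) d
    (by rw [support_monomial, if_neg one_ne_zero]; simp)
  obtain ⟨i, hiT, hdi⟩ := this
  have : d i = if i ∈ T then 0 else 1 := rfl
  rw [this, if_pos hiT] at hdi
  exact hdi rfl

lemma minimal_of_edge {m : ℕ} (hm : ∀ e ∈ E, e.card = m) {e₀ : Finset (Fin n)}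
    (he₀ : e₀ ∈ E) :
    Ideal.span (X '' (e₀ : Set (Fin n)) : Set (MvPolynomial (Fin n) K)) ∈
      ((dualIdeal K E) ^ 2).minimalPrimes := by
  classical
  refine ⟨⟨isPrime_span_X e₀,
    le_trans (Ideal.pow_le_self two_ne_zero) (dual_le_span_of_edge E he₀)⟩, ?_⟩
  rintro Q ⟨hQp, hQle⟩ hQP
  rw [Ideal.span_le]
  rintro g ⟨i, hi, rfl⟩
  have hi' : i ∈ e₀ := hi
  set dfun : Fin n → ℕ := fun j => if j ∈ e₀.erase i then 0 else 1 with hdfun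
  set d : Fin n →₀ ℕ := Finsupp.equivFunOnFinite.symm dfun with hdd
  have hdmem : monomial d (1:K) ∈ dualIdeal K E := by
    refine monomial_mem_dualIdeal fun e he => ?_
    have hnot : ¬ e ⊆ e₀.erase i := by
      intro hsub
      have h1 := Finset.card_le_card hsub
      rw [Finset.card_erase_of_mem hi', hm e he, hm e₀ he₀] at h1
      have hmpos : 0 < m := by
        rw [← hm e₀ he₀]
        exact Finset.card_pos.2 ⟨i, hi'⟩
      omega
    obtain ⟨j, hje, hj⟩ := Finset.not_subset.1 hnot
    refine ⟨j, hje, ?_⟩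
    have : d j = dfun j := rfl
    rw [this, hdfun]
    simp only [if_neg hj]
    exact one_ne_zero
  have hdQ : monomial d (1:K) ∈ Q := le_of_sq_le E hQp hQle hdmem
  rw [monomial_one_eq_prod] at hdQ
  obtain ⟨j, hjs, hjQ⟩ := exists_mem_of_prod_mem hQp hdQ
  have hjQ' : X j ∈ Q := hQp.mem_of_pow_mem _ hjQ
  have hje₀ : j ∈ e₀ := (X_mem_span_X_iff e₀ j).1 (hQP hjQ')
  have hdj : d j ≠ 0 := Finsupp.mem_support_iff.1 hjs
  have hji : j = i := by
    by_contra hji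
    apply hdj
    have : d j = dfun j := rfl
    rw [this, hdfun]
    simp only [if_pos (Finset.mem_erase.2 ⟨hji, hje₀⟩)]
  exact hji ▸ hjQ'

lemma sum_two_isCover {a : Fin n → ℕ} (h : SumTwoOneCovers E a) : IsCover E 2 a := by
  obtain ⟨b, c, hb, hc, rfl⟩ := h
  constructor
  · intro h0
    apply hb.1
    funext j
    have := congrFun h0 j
    simp only [Pi.add_apply, Pi.zero_apply] at this ⊢
    omega
  · intro e he
    have h1 := hb.2 e he
    have h2 := hc.2 e he
    have : ∑ i ∈ e, (b + c) i = ∑ i ∈ e, b i + ∑ i ∈ e, c i := by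
      simp only [Pi.add_apply]
      rw [Finset.sum_add_distrib]
    omega

/-- If `T` itself were an edge, the conditions on `C` are contradictory. -/
lemma not_edge_T {m : ℕ} (hE : E.Nonempty) (hm : ∀ e ∈ E, e.card = m)
    {T : Finset (Fin n)} (hTE : T ∈ E) {C : Fin n → ℕ}
    (hC2 : IsCover E 2 C) (hCnS : ¬ SumTwoOneCovers E C)
    (hD : ∀ D : Fin n → ℕ, D ≠ 0 → (∀ i ∈ T, D i = 0) →
      ¬ SumTwoOneCovers E (C + D)) : False := by
  classical
  have hsum2 : 2 ≤ ∑ j ∈ T, C j := hC2.2 T hTE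
  obtain ⟨j₀, hj₀T, hj₀⟩ : ∃ j₀ ∈ T, C j₀ ≠ 0 := by
    by_contra hcon
    push_neg at hcon
    have : ∑ j ∈ T, C j = 0 := Finset.sum_eq_zero fun j hj => hcon j hj
    omega
  set D : Fin n → ℕ := fun j => if j ∈ T then 0 else 2 with hDdef
  set b : Fin n → ℕ := fun j => if j = j₀ then 1 else if j ∈ T then 0 else 1 with hbdef
  set c : Fin n → ℕ := fun j => C j + D j - b j with hcdef
  have hble : ∀ j, b j ≤ C j + D j := by
    intro j
    rcases eq_or_ne j j₀ with rfl | hj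
    · simp only [hbdef, hDdef, if_pos rfl]
      omega
    · by_cases hjT : j ∈ T
      · simp only [hbdef, hDdef, if_neg hj, if_pos hjT]
        omega
      · simp only [hbdef, hDdef, if_neg hj, if_neg hjT]
        omega
  have hbc : C + D = b + c := by
    funext j
    have := hble j
    simp only [Pi.add_apply, hcdef]
    omega
  have hedge : ∀ e ∈ E, e ⊆ T → e = T := fun e he hsub =>
    Finset.eq_of_subset_of_card_le hsub (by rw [hm e he, hm T hTE])
  have hbT : ∀ j ∈ T, b j = if j = j₀ then 1 else 0 := by
    intro j hj
    rcases eq_or_ne j j₀ with rfl | hne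
    · simp [hbdef]
    · simp [hbdef, hne, hj]
  have hsumbT : ∑ j ∈ T, b j = 1 := by
    rw [Finset.sum_congr rfl hbT, Finset.sum_ite_eq' T j₀ (fun _ => 1), if_pos hj₀T]
  have hsumCDT : ∑ j ∈ T, (C j + D j) = ∑ j ∈ T, C j := by
    refine Finset.sum_congr rfl fun j hj => ?_
    simp [hDdef, hj]
  have hbcov : IsCover E 1 b := by
    constructor
    · intro h0
      have := congrFun h0 j₀
      simp [hbdef] at this
    · intro e he
      by_cases hsub : e ⊆ T
      · rw [hedge e he hsub]
        rw [one_le_sum_iff]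
        exact ⟨j₀, hj₀T, by simp [hbdef]⟩
      · obtain ⟨j, hje, hjT⟩ := Finset.not_subset.1 hsub
        rw [one_le_sum_iff]
        refine ⟨j, hje, ?_⟩
        have hne : j ≠ j₀ := fun h => hjT (h ▸ hj₀T)
        simp [hbdef, hne, hjT]
  have hccov : IsCover E 1 c := by
    have hsums : ∀ e ∈ E, 1 ≤ ∑ j ∈ e, c j := by
      intro e he
      by_cases hsub : e ⊆ T
      · rw [hedge e he hsub]
        have h1 : ∑ j ∈ T, c j + ∑ j ∈ T, b j = ∑ j ∈ T, (C j + D j) := by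
          rw [← Finset.sum_add_distrib]
          refine Finset.sum_congr rfl fun j hj => ?_
          have := hble j
          simp only [hcdef]
          omega
        rw [hsumbT, hsumCDT] at h1
        omega
      · obtain ⟨j, hje, hjT⟩ := Finset.not_subset.1 hsub
        rw [one_le_sum_iff]
        refine ⟨j, hje, ?_⟩
        have hne : j ≠ j₀ := fun h => hjT (h ▸ hj₀T)
        simp only [hcdef, hbdef, hDdef, if_neg hne, if_neg hjT]
        omega
    constructor
    · obtain ⟨e₂, he₂⟩ := hE
      obtain ⟨j, _, hj⟩ := (one_le_sum_iff e₂ c).1 (hsums e₂ he₂)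
      exact fun h0 => hj (congrFun h0 j)
    · exact hsums
  have hSumCD : SumTwoOneCovers E (C + D) := ⟨b, c, hbcov, hccov, hbc⟩
  by_cases hTu : T = Finset.univ
  · apply hCnS
    have hD0 : D = 0 := by
      funext j
      simp [hDdef, hTu ▸ Finset.mem_univ j]
    rwa [hD0, add_zero] at hSumCD
  · obtain ⟨j₁, hj₁⟩ : ∃ j, j ∉ T := by
      by_contra hcon
      push_neg at hcon
      exact hTu (Finset.eq_univ_iff_forall.2 hcon)
    refine hD D ?_ (fun i hi => by simp [hDdef, hi]) hSumCD
    intro h0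
    have := congrFun h0 j₁
    simp [hDdef, hj₁] at this

end Stmt5Aux

open Stmt5Aux

theorem stmt5 {K : Type*} [Field K] {n m : ℕ} (E : Finset (Finset (Fin n)))
    (hE : E.Nonempty) (hm : ∀ e ∈ E, e.card = m) (P : Ideal (MvPolynomial (Fin n) K)) :
    (IsAssociatedPrime P (MvPolynomial (Fin n) K ⧸ ((dualIdeal K E) ^ 2)) ∧
        P ∉ ((dualIdeal K E) ^ 2).minimalPrimes) ↔
      ∃ T : Finset (Fin n), P = Ideal.span (X '' (T : Set (Fin n))) ∧
        ∃ C : Fin n → ℕ, IsCover E 2 C ∧ ¬ SumTwoOneCovers E C ∧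
          (∀ i ∈ T, IsCover E 2 (C + Pi.single i 1) ∧
            SumTwoOneCovers E (C + Pi.single i 1)) ∧
          (∀ D : Fin n → ℕ, D ≠ 0 → (∀ i ∈ T, D i = 0) →
            ¬ SumTwoOneCovers E (C + D)) := by
  classical
  by_cases hdeg : (∅ : Finset (Fin n)) ∈ E
  · -- degenerate: the empty edge kills everything
    have hJbot : dualIdeal K E = ⊥ := by
      have h1 : dualIdeal K E ≤ Ideal.span (X '' ((∅ : Finset (Fin n)) : Set (Fin n))) :=
        dual_le_span_of_edge E hdeg
      rw [Finset.coe_empty, Set.image_empty, Ideal.span_empty] at h1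
      exact le_bot_iff.1 h1
    have hJ2bot : (dualIdeal K E) ^ 2 = ⊥ := by
      rw [hJbot, pow_two, Ideal.mul_bot]
    constructor
    · rintro ⟨hPx, hmin⟩
      obtain ⟨hP, x, hx⟩ := isAssociatedPrime_iff.1 hPx
      exfalso
      obtain ⟨f, rfl⟩ := Ideal.Quotient.mk_surjective x
      have hann : ∀ g, g ∈ P ↔ g * f = 0 := by
        intro g
        rw [hx, mem_ann_iff, hJ2bot, Ideal.mem_bot]
      rcases eq_or_ne f 0 with rfl | hf
      · have h1 : (1 : MvPolynomial (Fin n) K) ∈ P := (hann 1).2 (by rw [mul_zero])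
        exact hP.ne_top ((Ideal.eq_top_iff_one P).2 h1)
      · have hPbot : P = ⊥ := by
          ext g
          rw [hann, Ideal.mem_bot, mul_eq_zero]
          exact ⟨fun h => h.resolve_right hf, Or.inl⟩
        apply hmin
        rw [hPbot]
        exact ⟨⟨Ideal.bot_prime, by rw [hJ2bot]⟩, fun y _ _ => bot_le⟩
    · rintro ⟨T, hPT, C, hC2, -, -, -⟩
      exfalso
      have := hC2.2 ∅ hdeg
      simp at this
  · -- all edges nonempty
    have hne : ∀ e ∈ E, e.Nonempty := fun e he =>
      Finset.nonempty_iff_ne_empty.2 fun h => hdeg (h ▸ he)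
    set A : Set (Fin n →₀ ℕ) := {d | SumTwoOneCovers E ⇑d} with hAdef
    have hchar : ∀ g : MvPolynomial (Fin n) K,
        g ∈ (dualIdeal K E) ^ 2 ↔ ∀ d ∈ g.support, d ∈ A :=
      fun g => mem_sq_iff hE hne g
    constructor
    · -- forward
      rintro ⟨hPx, hmin⟩
      obtain ⟨hP, x, hx⟩ := isAssociatedPrime_iff.1 hPx
      obtain ⟨f, rfl⟩ := Ideal.Quotient.mk_surjective x
      have hann : ∀ g, g ∈ P ↔ g * f ∈ (dualIdeal K E) ^ 2 := fun g => by
        rw [hx, mem_ann_iff]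
      have hfI : f ∉ (dualIdeal K E) ^ 2 := fun h =>
        hP.ne_top ((Ideal.eq_top_iff_one P).2 ((hann 1).2 (by rwa [one_mul])))
      have hmono := monomials_mem_of_mem hchar hP hfI hann
      set T : Finset (Fin n) := Finset.univ.filter (fun i => X i ∈ P) with hTdef
      have hXT : ∀ i, X i ∈ P ↔ i ∈ T := fun i =>
        ⟨fun h => Finset.mem_filter.2 ⟨Finset.mem_univ _, h⟩,
          fun h => (Finset.mem_filter.1 h).2⟩
      have hPT : P = Ideal.span (X '' (T : Set (Fin n))) := by
        apply le_antisymm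
        · intro p hp
          rw [mem_span_X_iff]
          intro d hd
          have hd1 : monomial d (1:K) ∈ P := hmono p hp d hd
          rw [monomial_one_eq_prod] at hd1
          obtain ⟨j, hjs, hjP⟩ := exists_mem_of_prod_mem hP hd1
          exact ⟨j, (hXT j).1 (hP.mem_of_pow_mem _ hjP), Finsupp.mem_support_iff.1 hjs⟩
        · rw [Ideal.span_le]
          rintro g ⟨i, hi, rfl⟩
          exact (hXT i).2 hi
      have hsupp_add : ∀ u ∈ f.support, ∀ i ∈ T, (u + Finsupp.single i 1) ∈ A := by
        intro u hu i hiT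
        have hXf : X i * f ∈ (dualIdeal K E) ^ 2 := (hann (X i)).1 ((hXT i).2 hiT)
        have hmem : (Finsupp.single i 1 + u) ∈ (X i * f).support :=
          MvPolynomial.mem_support_iff.2 (by
            rw [coeff_X_mul]
            exact MvPolynomial.mem_support_iff.1 hu)
        have := (hchar _).1 hXf _ hmem
        rwa [add_comm] at this
      obtain ⟨Cf, hCfs, hcolon⟩ := exists_colon_le hP hann
      have hCA : Cf ∉ A := by
        intro hCA
        have h1 : (1 : MvPolynomial (Fin n) K) ∈ P := hcolon 1 (by
          rw [one_mul]
          refine (hchar _).2 fun d hd => ?_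
          rw [support_monomial, if_neg one_ne_zero, Finset.mem_singleton] at hd
          exact hd ▸ hCA)
        exact hP.ne_top ((Ideal.eq_top_iff_one P).2 h1)
      have hCi : ∀ i ∈ T, (Cf + Finsupp.single i 1) ∈ A :=
        fun i hi => hsupp_add Cf hCfs i hi
      have hDcond : ∀ D : Fin n → ℕ, D ≠ 0 → (∀ i ∈ T, D i = 0) →
          ¬ SumTwoOneCovers E (⇑Cf + D) := by
        intro D hD0 hDT hsum
        set Df : Fin n →₀ ℕ := Finsupp.equivFunOnFinite.symm D with hDf
        have hmem : monomial Df (1:K) * monomial Cf 1 ∈ (dualIdeal K E) ^ 2 := by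
          rw [monomial_mul, mul_one]
          refine (hchar _).2 fun d hd => ?_
          rw [support_monomial, if_neg one_ne_zero, Finset.mem_singleton] at hd
          subst hd
          show SumTwoOneCovers E ⇑(Df + Cf)
          rw [Finsupp.coe_add]
          have hDfc : ⇑Df = D := rfl
          rw [hDfc, add_comm]
          exact hsum
        have hPm : monomial Df (1:K) ∈ P := hcolon _ hmem
        rw [hPT, mem_span_X_iff] at hPm
        obtain ⟨i, hiT, hi⟩ := hPm Df
          (by rw [support_monomial, if_neg one_ne_zero]; simp)
        refine hi ?_
        have : Df i = D i := rfl
        rw [this]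
        exact hDT i hiT
      have hsqP : (dualIdeal K E) ^ 2 ≤ P := fun g hg =>
        (hann g).2 (Ideal.mul_mem_right f _ hg)
      have hJP : dualIdeal K E ≤ Ideal.span (X '' (T : Set (Fin n))) := by
        rw [← hPT]
        exact le_of_sq_le E hP hsqP
      obtain ⟨e₁, he₁, he₁T⟩ := exists_edge_subset E hE hJP
      have hTnot : T ∉ E := fun hTE =>
        hmin (by rw [hPT]; exact minimal_of_edge E hm hTE)
      have he₁ssub : e₁ ⊂ T :=
        he₁T.ssubset_of_ne (fun h => hTnot (h ▸ he₁))
      have hTe : ∀ e ∈ E, ∃ i ∈ T, i ∉ e := by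
        intro e he
        by_contra hc
        push_neg at hc
        have hTsub : T ⊆ e := fun i hi => hc i hi
        have h1 := Finset.card_lt_card (he₁ssub.trans_subset hTsub)
        rw [hm e he, hm e₁ he₁] at h1
        omega
      have hCi' : ∀ i ∈ T, SumTwoOneCovers E (⇑Cf + Pi.single i 1) := by
        intro i hi
        have h1 := hCi i hi
        rw [hAdef, Set.mem_setOf_eq] at h1
        have hco : ((Cf + Finsupp.single i 1 : Fin n →₀ ℕ) : Fin n → ℕ) = ⇑Cf + Pi.single i 1 := by
          rw [Finsupp.coe_add, Finsupp.single_eq_pi_single]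
        rwa [hco] at h1
      have hCsum : ∀ e ∈ E, 2 ≤ ∑ j ∈ e, Cf j := by
        intro e he
        obtain ⟨i, hiT, hie⟩ := hTe e he
        have hc2 := sum_two_isCover E (hCi' i hiT)
        have h2 := hc2.2 e he
        have heq : ∑ j ∈ e, ((⇑Cf + Pi.single i 1 : Fin n → ℕ) j) = ∑ j ∈ e, Cf j := by
          refine Finset.sum_congr rfl fun j hj => ?_
          have hji : j ≠ i := fun h => hie (h ▸ hj)
          simp [Pi.add_apply, Pi.single_eq_of_ne hji]
        rw [heq] at h2
        exact h2
      have hC2 : IsCover E 2 ⇑Cf := by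
        refine ⟨?_, hCsum⟩
        obtain ⟨e₀, he₀⟩ := hE
        obtain ⟨j, -, hj⟩ := (one_le_sum_iff e₀ ⇑Cf).1 (le_trans one_le_two (hCsum e₀ he₀))
        exact fun h0 => hj (congrFun h0 j)
      refine ⟨T, hPT, ⇑Cf, hC2, hCA, ?_, hDcond⟩
      intro i hi
      exact ⟨sum_two_isCover E (hCi' i hi), hCi' i hi⟩
    · -- backward
      rintro ⟨T, hPT, C, hC2, hCnS, hTi, hD⟩
      set Cf : Fin n →₀ ℕ := Finsupp.equivFunOnFinite.symm C with hCfdef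
      have hCfc : ⇑Cf = C := rfl
      have hcolon : ∀ g : MvPolynomial (Fin n) K,
          g * monomial Cf (1:K) ∈ (dualIdeal K E) ^ 2 ↔
            g ∈ Ideal.span (X '' (T : Set (Fin n))) := by
        intro g
        constructor
        · intro hg
          rw [mem_span_X_iff]
          intro d hd
          have hmem : (d + Cf) ∈ (g * monomial Cf 1).support := by
            rw [MvPolynomial.mem_support_iff, coeff_mul_monomial, mul_one]
            exact MvPolynomial.mem_support_iff.1 hd
          have hA : SumTwoOneCovers E ⇑(d + Cf) := (hchar _).1 hg _ hmem
          rw [Finsupp.coe_add, hCfc] at hA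
          by_contra hc
          push_neg at hc
          rcases eq_or_ne d 0 with rfl | hd0
          · apply hCnS
            simpa using hA
          · refine hD ⇑d ?_ hc (by rwa [add_comm] at hA)
            intro h0
            exact hd0 (DFunLike.coe_injective (h0.trans (Finsupp.coe_zero).symm))
        · intro hg
          have hle : Ideal.span (X '' (T : Set (Fin n))) ≤
              ((dualIdeal K E) ^ 2).colon
                (Submodule.span (MvPolynomial (Fin n) K) {monomial Cf (1:K)}) := by
            rw [Ideal.span_le]
            rintro y ⟨i, hi, rfl⟩
            have hiT : i ∈ T := hi
            rw [SetLike.mem_coe, Submodule.mem_colon_span_singleton, smul_eq_mul]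
            have hXm : X i * monomial Cf (1:K) = monomial (Cf + Finsupp.single i 1) 1 := by
              rw [MvPolynomial.X, monomial_mul, one_mul, add_comm]
            rw [hXm]
            refine (hchar _).2 fun d hd => ?_
            rw [support_monomial, if_neg one_ne_zero, Finset.mem_singleton] at hd
            subst hd
            show SumTwoOneCovers E ((Cf + Finsupp.single i 1 : Fin n →₀ ℕ) : Fin n → ℕ)
            have hco : ((Cf + Finsupp.single i 1 : Fin n →₀ ℕ) : Fin n → ℕ) = C + Pi.single i 1 := by
              rw [Finsupp.coe_add, hCfc, Finsupp.single_eq_pi_single]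
            rw [hco]
            exact (hTi i hiT).2
          have := hle hg
          rwa [Submodule.mem_colon_span_singleton, smul_eq_mul] at this
      have hprime : P.IsPrime := hPT ▸ isPrime_span_X T
      have hassoc : IsAssociatedPrime P
          (MvPolynomial (Fin n) K ⧸ (dualIdeal K E) ^ 2) := by
        refine isAssociatedPrime_iff.2 ⟨hprime, Ideal.Quotient.mk ((dualIdeal K E) ^ 2) (monomial Cf 1), ?_⟩
        ext g
        rw [mem_ann_iff, hcolon, hPT]
      refine ⟨hassoc, ?_⟩
      intro hmin
      have hsqP : (dualIdeal K E) ^ 2 ≤ Ideal.span (X '' (T : Set (Fin n))) :=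
        fun g hg => (hcolon g).1 (Ideal.mul_mem_right _ _ hg)
      have hJP : dualIdeal K E ≤ Ideal.span (X '' (T : Set (Fin n))) :=
        le_of_sq_le E (isPrime_span_X T) hsqP
      obtain ⟨e₁, he₁, he₁T⟩ := exists_edge_subset E hE hJP
      have hTnotE : T ∉ E := fun hTE => not_edge_T E hE hm hTE hC2 hCnS hD
      have he₁ne : e₁ ≠ T := fun h => hTnotE (h ▸ he₁)
      have hq : Ideal.span (X '' (e₁ : Set (Fin n)) : Set (MvPolynomial (Fin n) K)) ≤
          Ideal.span (X '' (T : Set (Fin n))) :=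
        Ideal.span_mono (Set.image_mono (Finset.coe_subset.2 he₁T))
      have hle2 : (dualIdeal K E) ^ 2 ≤ Ideal.span (X '' (e₁ : Set (Fin n))) :=
        le_trans (Ideal.pow_le_self two_ne_zero) (dual_le_span_of_edge E he₁)
      have hPle : P ≤ Ideal.span (X '' (e₁ : Set (Fin n))) :=
        hmin.2 ⟨isPrime_span_X e₁, hle2⟩ (by rw [hPT]; exact hq)
      obtain ⟨i, hiT, hinot⟩ := Finset.exists_of_ssubset
        (he₁T.ssubset_of_ne he₁ne)
      have hXi : X i ∈ P := by
        rw [hPT]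
        exact (X_mem_span_X_iff T i).2 hiT
      exact hinot ((X_mem_span_X_iff e₁ i).1 (hPle hXi))
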